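/- Let d be a power of 2 with log₂ d even, and let B_1, …, B_d ⊆ {1,…,d} be sets with Σ_{i=1}^d |B_i| ≤ M. Choose k uniformly at random from {1,…,(log₂ d)/2}, then choose R uniformly at random among all subsets of {1,…,d} of size 2^k, and then choose r_1, …, r_d independently and uniformly at random from R. Then the probability that there exist distinct indices i, j ∈ {1,…,d} with r_i = r_j, r_i ∈ B_i, and r_j ∈ B_j is at most 160·M/(d·log₂ d). -/

import Mathlib

open Finset

lemma countR {α : Type*} [DecidableEq α] (u : Finset α) (x : α) (hx : x ∈ u) (n : ℕ) :
    ((u.powersetCard (n+1)).filter (fun R => x ∈ R)).card = (u.card - 1).choose n := by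
  have h1 : u = insert x (u.erase x) := (Finset.insert_erase hx).symm
  have hxn : x ∉ u.erase x := Finset.notMem_erase x u
  rw [h1, Finset.powersetCard_succ_insert hxn]
  rw [Finset.filter_union]
  have h2 : ((u.erase x).powersetCard (n+1)).filter (fun R => x ∈ R) = ∅ := by
    apply Finset.filter_eq_empty_iff.2
    intro R hR
    simp only [Finset.mem_powersetCard] at hR
    exact fun hxR => hxn (hR.1 hxR)
  have h3 : (((u.erase x).powersetCard n).image (insert x)).filter (fun R => x ∈ R)
      = ((u.erase x).powersetCard n).image (insert x) := by
    apply Finset.filter_eq_self.2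
    intro R hR
    simp only [Finset.mem_image] at hR
    obtain ⟨S, _, rfl⟩ := hR
    exact Finset.mem_insert_self x S
  rw [h2, h3, Finset.empty_union]
  rw [Finset.card_image_of_injOn, Finset.card_powersetCard, Finset.card_erase_of_mem hx]
  · rw [Finset.insert_erase hx]
  intro S hS T hT hST
  simp only [Finset.mem_coe, Finset.mem_powersetCard] at hS hT
  have hxS : x ∉ S := fun h => hxn (hS.1 h)
  have hxT : x ∉ T := fun h => hxn (hT.1 h)
  rw [← Finset.erase_insert hxS, ← Finset.erase_insert hxT, hST]

lemma sumR {α : Type*} [DecidableEq α] (u : Finset α) (n : ℕ) (f : α → ℝ) :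
    ∑ R ∈ u.powersetCard (n+1), ∑ x ∈ R, f x
      = ∑ x ∈ u, ((u.card - 1).choose n : ℝ) * f x := by
  have h1 : ∀ R ∈ u.powersetCard (n+1), ∑ x ∈ R, f x
      = ∑ x ∈ u, if x ∈ R then f x else 0 := by
    intro R hR
    rw [Finset.sum_ite_mem, Finset.inter_eq_right.2 (Finset.mem_powersetCard.1 hR).1]
  rw [Finset.sum_congr rfl h1, Finset.sum_comm]
  refine Finset.sum_congr rfl fun x hx => ?_
  rw [← Finset.sum_filter, Finset.sum_const, countR u x hx n, nsmul_eq_mul]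

lemma cardA (d : ℕ) (R : Finset (Fin d)) (x : Fin d) (hx : x ∈ R) (i j : Fin d)
    (hij : i ≠ j) :
    ((Fintype.piFinset fun _ : Fin d => R).filter (fun r => r i = x ∧ r j = x)).card
      = R.card ^ (d - 2) := by
  have h1 : ((Fintype.piFinset fun _ : Fin d => R).filter (fun r => r i = x ∧ r j = x))
      = Fintype.piFinset (fun t : Fin d => if t = i ∨ t = j then {x} else R) := by
    ext r
    simp only [Finset.mem_filter, Fintype.mem_piFinset]
    constructor
    · rintro ⟨h, hi, hj⟩ t
      split_ifs with ht
      · rcases ht with rfl | rfl <;> simp [hi, hj]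
      · exact h t
    · intro h
      refine ⟨fun t => ?_, ?_, ?_⟩
      · have := h t
        split_ifs at this with ht
        · simp only [Finset.mem_singleton] at this; exact this ▸ hx
        · exact this
      · have := h i; simpa using this
      · have := h j; rw [if_pos (Or.inr rfl)] at this; simpa using this
  rw [h1, Fintype.card_piFinset]
  have h2 : ∀ t : Fin d, (if t = i ∨ t = j then ({x} : Finset (Fin d)) else R).card
      = if t = i ∨ t = j then 1 else R.card := by
    intro t; split_ifs <;> simp
  simp only [h2]
  rw [Finset.prod_ite, Finset.prod_const_one, Finset.prod_const, one_mul]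
  congr 1
  have h3 : Finset.univ.filter (fun t : Fin d => ¬(t = i ∨ t = j))
      = (Finset.univ.filter (fun t : Fin d => t = i ∨ t = j))ᶜ := by
    ext t; simp
  rw [h3, Finset.card_compl]
  have h4 : Finset.univ.filter (fun t : Fin d => t = i ∨ t = j) = {i, j} := by
    ext t; simp
  rw [h4, Finset.card_insert_of_notMem (by simp [hij]), Finset.card_singleton]
  simp

lemma cardAx (d : ℕ) (B : Fin d → Finset (Fin d)) (R : Finset (Fin d)) (x : Fin d)
    (hx : x ∈ R) :
    ((Fintype.piFinset fun _ : Fin d => R).filter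
        (fun r => ∃ i j : Fin d, i ≠ j ∧ r i = x ∧ r j = x ∧ x ∈ B i ∧ x ∈ B j)).card
      ≤ (Finset.univ.filter (fun i : Fin d => x ∈ B i)).card ^ 2 * R.card ^ (d - 2) := by
  classical
  set Q : Finset (Fin d × Fin d) :=
    (Finset.univ ×ˢ Finset.univ).filter (fun p => p.1 ≠ p.2 ∧ x ∈ B p.1 ∧ x ∈ B p.2) with hQ
  have hsub : ((Fintype.piFinset fun _ : Fin d => R).filter
        (fun r => ∃ i j : Fin d, i ≠ j ∧ r i = x ∧ r j = x ∧ x ∈ B i ∧ x ∈ B j))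
      ⊆ Q.biUnion (fun p => (Fintype.piFinset fun _ : Fin d => R).filter
        (fun r => r p.1 = x ∧ r p.2 = x)) := by
    intro r hr
    simp only [Finset.mem_filter] at hr
    obtain ⟨hrT, i, j, hij, hi, hj, hBi, hBj⟩ := hr
    refine Finset.mem_biUnion.2 ⟨(i, j), ?_, ?_⟩
    · simp [hQ, hij, hBi, hBj]
    · exact Finset.mem_filter.2 ⟨hrT, hi, hj⟩
  calc _ ≤ (Q.biUnion (fun p => (Fintype.piFinset fun _ : Fin d => R).filter
        (fun r => r p.1 = x ∧ r p.2 = x))).card := Finset.card_le_card hsub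
    _ ≤ ∑ p ∈ Q, ((Fintype.piFinset fun _ : Fin d => R).filter
        (fun r => r p.1 = x ∧ r p.2 = x)).card := Finset.card_biUnion_le
    _ ≤ ∑ _p ∈ Q, R.card ^ (d - 2) := by
        refine Finset.sum_le_sum fun p hp => ?_
        have hp' : p.1 ≠ p.2 := (Finset.mem_filter.1 hp).2.1
        rw [cardA d R x hx p.1 p.2 hp']
    _ = Q.card * R.card ^ (d - 2) := by rw [Finset.sum_const, smul_eq_mul]
    _ ≤ _ := by
        refine Nat.mul_le_mul_right _ ?_
        have : Q ⊆ (Finset.univ.filter (fun i : Fin d => x ∈ B i))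
            ×ˢ (Finset.univ.filter (fun i : Fin d => x ∈ B i)) := by
          intro p hp
          simp only [hQ, Finset.mem_filter, Finset.mem_product] at hp ⊢
          exact ⟨⟨Finset.mem_univ _, hp.2.2.1⟩, Finset.mem_univ _, hp.2.2.2⟩
        calc Q.card ≤ _ := Finset.card_le_card this
          _ = _ := by rw [Finset.card_product]; ring

lemma perR (d : ℕ) (B : Fin d → Finset (Fin d)) (R : Finset (Fin d)) :
    ((Fintype.piFinset fun _ : Fin d => R).filter
        (fun r => ∃ i j : Fin d, i ≠ j ∧ r i = r j ∧ r i ∈ B i ∧ r j ∈ B j)).card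
      ≤ ∑ x ∈ R, min (R.card ^ d)
          ((Finset.univ.filter (fun i : Fin d => x ∈ B i)).card ^ 2 * R.card ^ (d - 2)) := by
  classical
  have hsub : ((Fintype.piFinset fun _ : Fin d => R).filter
        (fun r => ∃ i j : Fin d, i ≠ j ∧ r i = r j ∧ r i ∈ B i ∧ r j ∈ B j))
      ⊆ R.biUnion (fun x => (Fintype.piFinset fun _ : Fin d => R).filter
        (fun r => ∃ i j : Fin d, i ≠ j ∧ r i = x ∧ r j = x ∧ x ∈ B i ∧ x ∈ B j)) := by
    intro r hr
    simp only [Finset.mem_filter] at hr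
    obtain ⟨hrT, i, j, hij, hij', hBi, hBj⟩ := hr
    refine Finset.mem_biUnion.2 ⟨r i, Fintype.mem_piFinset.1 hrT i, ?_⟩
    exact Finset.mem_filter.2 ⟨hrT, i, j, hij, rfl, hij'.symm, hBi, hij' ▸ hBj⟩
  calc _ ≤ _ := Finset.card_le_card hsub
    _ ≤ ∑ x ∈ R, ((Fintype.piFinset fun _ : Fin d => R).filter
        (fun r => ∃ i j : Fin d, i ≠ j ∧ r i = x ∧ r j = x ∧ x ∈ B i ∧ x ∈ B j)).card :=
      Finset.card_biUnion_le
    _ ≤ _ := by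
      refine Finset.sum_le_sum fun x hx => le_min ?_ (cardAx d B R x hx)
      calc _ ≤ (Fintype.piFinset fun _ : Fin d => R).card := Finset.card_filter_le _ _
        _ = R.card ^ d := by
          rw [Fintype.card_piFinset, Finset.prod_const, Finset.card_univ, Fintype.card_fin]

lemma halfTail (m K : ℕ) : ∑ k ∈ Finset.Icc m K, ((1:ℝ)/2) ^ k ≤ 2 * (1/2) ^ m := by
  have h0 : Finset.Icc m K = Finset.Ico m (K+1) := by
    ext k; simp [Nat.lt_succ_iff]
  rw [h0, Finset.sum_Ico_eq_sum_range]
  have h1 : ∀ j ∈ Finset.range (K + 1 - m), ((1:ℝ)/2) ^ (m + j) = (1/2)^m * (1/2)^j := by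
    intro j _; rw [pow_add]
  rw [Finset.sum_congr rfl h1, ← Finset.mul_sum, mul_comm (2:ℝ)]
  refine mul_le_mul_of_nonneg_left ?_ (by positivity)
  exact sum_geometric_two_le _

lemma geomMin (n K : ℕ) :
    ∑ k ∈ Finset.Icc 1 K, min ((2:ℝ) ^ k) ((n:ℝ) ^ 2 / 2 ^ k) ≤ 4 * n := by
  rcases Nat.eq_zero_or_pos n with rfl | hn
  · calc ∑ k ∈ Finset.Icc 1 K, min ((2:ℝ) ^ k) (((0:ℕ):ℝ) ^ 2 / 2 ^ k)
        ≤ ∑ _k ∈ Finset.Icc 1 K, (0:ℝ) := by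
          refine Finset.sum_le_sum fun k _ => min_le_of_right_le (by norm_num)
      _ ≤ 4 * ((0:ℕ):ℝ) := by simp
  set L := Nat.log 2 n with hL
  have h2L : (2:ℝ) ^ L ≤ n := by
    exact_mod_cast Nat.cast_le.2 (Nat.pow_log_le_self 2 hn.ne')
  have hn2L : (n:ℝ) < 2 ^ (L + 1) := by
    exact_mod_cast Nat.cast_lt.2 (Nat.lt_pow_succ_log_self (by norm_num) n)
  have hstep : ∀ k ∈ Finset.Icc 1 K, min ((2:ℝ) ^ k) ((n:ℝ) ^ 2 / 2 ^ k)
      ≤ if k ≤ L then (2:ℝ) ^ k else (n:ℝ) ^ 2 / 2 ^ k := by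
    intro k _
    split_ifs
    · exact min_le_left _ _
    · exact min_le_right _ _
  have hA : ∑ k ∈ (Finset.Icc 1 K).filter (fun k => k ≤ L), (2:ℝ) ^ k ≤ 2 * (n:ℝ) := by
    calc ∑ k ∈ (Finset.Icc 1 K).filter (fun k => k ≤ L), (2:ℝ) ^ k
        ≤ ∑ k ∈ Finset.range (L+1), (2:ℝ) ^ k := by
          refine Finset.sum_le_sum_of_subset_of_nonneg ?_ (fun k _ _ => by positivity)
          intro k hk
          simp only [Finset.mem_filter, Finset.mem_Icc, Finset.mem_range] at hk ⊢
          omega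
      _ = ((2:ℝ) ^ (L+1) - 1) / (2 - 1) := geom_sum_eq (by norm_num) _
      _ ≤ 2 * 2 ^ L := by
          rw [pow_succ]
          nlinarith [pow_pos (by norm_num : (0:ℝ) < 2) L]
      _ ≤ 2 * (n:ℝ) := by linarith
  have hB : ∑ k ∈ (Finset.Icc 1 K).filter (fun k => ¬ k ≤ L), (n:ℝ) ^ 2 / 2 ^ k
      ≤ 2 * (n:ℝ) := by
    have hsub : (Finset.Icc 1 K).filter (fun k => ¬ k ≤ L) ⊆ Finset.Icc (L+1) K := by
      intro k hk
      simp only [Finset.mem_filter, Finset.mem_Icc, not_le] at hk ⊢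
      omega
    have h1 : ∀ k ∈ Finset.Icc (L+1) K, (n:ℝ) ^ 2 / 2 ^ k = (n:ℝ)^2 * (1/2) ^ k := by
      intro k _
      rw [one_div, inv_pow, div_eq_mul_inv]
    calc ∑ k ∈ (Finset.Icc 1 K).filter (fun k => ¬ k ≤ L), (n:ℝ) ^ 2 / 2 ^ k
        ≤ ∑ k ∈ Finset.Icc (L+1) K, (n:ℝ) ^ 2 / 2 ^ k :=
          Finset.sum_le_sum_of_subset_of_nonneg hsub (fun k _ _ => by positivity)
      _ = (n:ℝ)^2 * ∑ k ∈ Finset.Icc (L+1) K, ((1:ℝ)/2) ^ k := by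
          rw [Finset.sum_congr rfl h1, ← Finset.mul_sum]
      _ ≤ (n:ℝ)^2 * (2 * (1/2) ^ (L+1)) :=
          mul_le_mul_of_nonneg_left (halfTail _ _) (by positivity)
      _ ≤ 2 * (n:ℝ) := by
          have h2 : ((1:ℝ)/2) ^ (L+1) = ((2:ℝ)^(L+1))⁻¹ := by
            rw [one_div, inv_pow]
          rw [h2]
          have hpos : (0:ℝ) < 2 ^ (L+1) := by positivity
          have hc : (n:ℝ) * ((2:ℝ)^(L+1))⁻¹ ≤ 1 := by
            rw [← div_eq_mul_inv, div_le_one hpos]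
            exact le_of_lt hn2L
          have hnn : (0:ℝ) ≤ (n:ℝ) := Nat.cast_nonneg n
          nlinarith
  calc ∑ k ∈ Finset.Icc 1 K, min ((2:ℝ) ^ k) ((n:ℝ) ^ 2 / 2 ^ k)
      ≤ ∑ k ∈ Finset.Icc 1 K, if k ≤ L then (2:ℝ) ^ k else (n:ℝ) ^ 2 / 2 ^ k :=
        Finset.sum_le_sum hstep
    _ = ∑ k ∈ (Finset.Icc 1 K).filter (fun k => k ≤ L), (2:ℝ) ^ k
        + ∑ k ∈ (Finset.Icc 1 K).filter (fun k => ¬ k ≤ L), (n:ℝ) ^ 2 / 2 ^ k := by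
        rw [Finset.sum_ite]
    _ ≤ 2 * (n:ℝ) + 2 * (n:ℝ) := add_le_add hA hB
    _ = 4 * (n:ℝ) := by ring

lemma perK (d : ℕ) (B : Fin d → Finset (Fin d)) (s : ℕ) (hs2 : 2 ≤ s)
    (hsd : s ≤ d) :
    ((((Finset.univ : Finset (Fin d)).powersetCard s).card : ℝ))⁻¹ *
        ∑ R ∈ (Finset.univ : Finset (Fin d)).powersetCard s,
          ((((Fintype.piFinset fun _ : Fin d => R).filter fun r =>
              ∃ i j : Fin d, i ≠ j ∧ r i = r j ∧ r i ∈ B i ∧ r j ∈ B j).card : ℝ) /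
            (((Fintype.piFinset fun _ : Fin d => R).card : ℝ)))
      ≤ (∑ x : Fin d, min ((s:ℝ))
          (((Finset.univ.filter (fun i : Fin d => x ∈ B i)).card : ℝ) ^ 2 / (s:ℝ))) / d := by
  classical
  set n : Fin d → ℕ := fun x => (Finset.univ.filter (fun i : Fin d => x ∈ B i)).card with hn
  set g : Fin d → ℝ := fun x => min (1:ℝ) ((n x : ℝ)^2 / (s:ℝ)^2) with hg
  have hsR : (0:ℝ) < (s:ℝ) := by
    have : 0 < s := by omega
    exact_mod_cast this
  have hd0 : 0 < d := by omega
  have hC : ((Finset.univ : Finset (Fin d)).powersetCard s).card = d.choose s := by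
    rw [Finset.card_powersetCard, Finset.card_univ, Fintype.card_fin]
  have hCpos : 0 < d.choose s := Nat.choose_pos hsd
  have hterm : ∀ R ∈ (Finset.univ : Finset (Fin d)).powersetCard s,
      ((((Fintype.piFinset fun _ : Fin d => R).filter fun r =>
              ∃ i j : Fin d, i ≠ j ∧ r i = r j ∧ r i ∈ B i ∧ r j ∈ B j).card : ℝ) /
            (((Fintype.piFinset fun _ : Fin d => R).card : ℝ)))
      ≤ ∑ x ∈ R, g x := by
    intro R hR
    have hRc : R.card = s := (Finset.mem_powersetCard.1 hR).2
    have hpi : ((Fintype.piFinset fun _ : Fin d => R).card : ℝ) = (s:ℝ)^d := by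
      rw [Fintype.card_piFinset, Finset.prod_const, Finset.card_univ, Fintype.card_fin, hRc]
      push_cast; ring
    rw [hpi]
    have h1 : (((Fintype.piFinset fun _ : Fin d => R).filter fun r =>
              ∃ i j : Fin d, i ≠ j ∧ r i = r j ∧ r i ∈ B i ∧ r j ∈ B j).card : ℕ)
        ≤ ∑ x ∈ R, min (s ^ d) (n x ^ 2 * s ^ (d - 2)) := by
      have h2 := perR d B R
      rw [hRc] at h2
      exact h2
    calc ((((Fintype.piFinset fun _ : Fin d => R).filter fun r =>
              ∃ i j : Fin d, i ≠ j ∧ r i = r j ∧ r i ∈ B i ∧ r j ∈ B j).card : ℝ)) / (s:ℝ)^d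
        ≤ ((∑ x ∈ R, min (s ^ d) (n x ^ 2 * s ^ (d - 2)) : ℕ) : ℝ) / (s:ℝ)^d := by
          have h1' : ((((Fintype.piFinset fun _ : Fin d => R).filter fun r =>
              ∃ i j : Fin d, i ≠ j ∧ r i = r j ∧ r i ∈ B i ∧ r j ∈ B j).card : ℝ))
              ≤ ((∑ x ∈ R, min (s ^ d) (n x ^ 2 * s ^ (d - 2)) : ℕ) : ℝ) := by
            exact_mod_cast h1
          exact div_le_div_of_nonneg_right h1' (le_of_lt (pow_pos hsR d)) |>.trans_eq rfl
      _ = ∑ x ∈ R, g x := by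
          rw [Nat.cast_sum, Finset.sum_div]
          refine Finset.sum_congr rfl fun x hx => ?_
          rw [Nat.cast_min]
          push_cast
          rw [← min_div_div_right (le_of_lt (pow_pos hsR d))]
          have hd2 : 2 ≤ d := le_trans hs2 hsd
          have h5 : 2 + (d - 2) = d := Nat.add_sub_cancel' hd2
          have e1 : (s:ℝ)^d / (s:ℝ)^d = 1 := div_self (ne_of_gt (pow_pos hsR d))
          have hsplit : (s:ℝ)^d = (s:ℝ)^2 * (s:ℝ)^(d-2) := by rw [← pow_add, h5]
          have e2 : (n x:ℝ)^2 * (s:ℝ)^(d-2) / (s:ℝ)^d = (n x:ℝ)^2/(s:ℝ)^2 := by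
            rw [hsplit]
            exact mul_div_mul_right _ _ (ne_of_gt (pow_pos hsR (d-2)))
          rw [e1, e2]
  have hratio : (((d-1).choose (s-1) : ℕ) : ℝ) * ((d.choose s : ℝ))⁻¹ = (s:ℝ)/(d:ℝ) := by
    have hnat : d * ((d-1).choose (s-1)) = d.choose s * s := by
      have h3 := Nat.add_one_mul_choose_eq (d-1) (s-1)
      rw [show d - 1 + 1 = d by omega, show s - 1 + 1 = s by omega] at h3
      exact h3
    have hR3 : ((d:ℝ)) * (((d-1).choose (s-1) : ℕ) : ℝ) = ((d.choose s : ℕ) : ℝ) * (s:ℝ) := by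
      exact_mod_cast hnat
    have hCR : (0:ℝ) < ((d.choose s : ℕ) : ℝ) := by exact_mod_cast hCpos
    have hdR : (0:ℝ) < (d:ℝ) := by exact_mod_cast hd0
    field_simp
    linarith [hR3]
  have hgnn : ∀ x, 0 ≤ g x := fun x => le_min zero_le_one (by positivity)
  calc ((((Finset.univ : Finset (Fin d)).powersetCard s).card : ℝ))⁻¹ *
        ∑ R ∈ (Finset.univ : Finset (Fin d)).powersetCard s,
          ((((Fintype.piFinset fun _ : Fin d => R).filter fun r =>
              ∃ i j : Fin d, i ≠ j ∧ r i = r j ∧ r i ∈ B i ∧ r j ∈ B j).card : ℝ) /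
            (((Fintype.piFinset fun _ : Fin d => R).card : ℝ)))
      ≤ ((((Finset.univ : Finset (Fin d)).powersetCard s).card : ℝ))⁻¹ *
        ∑ R ∈ (Finset.univ : Finset (Fin d)).powersetCard s, ∑ x ∈ R, g x := by
        refine mul_le_mul_of_nonneg_left (Finset.sum_le_sum hterm) (by positivity)
    _ = ((d.choose s : ℝ))⁻¹ * ∑ x : Fin d, (((d-1).choose (s-1) : ℕ) : ℝ) * g x := by
        rw [hC]
        congr 1
        have h4 := sumR (Finset.univ : Finset (Fin d)) (s-1) g
        rw [show s - 1 + 1 = s by omega, Finset.card_univ, Fintype.card_fin] at h4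
        exact h4
    _ = ∑ x : Fin d, ((s:ℝ)/(d:ℝ)) * g x := by
        rw [Finset.mul_sum]
        refine Finset.sum_congr rfl fun x _ => ?_
        rw [← mul_assoc, mul_comm (((d.choose s : ℝ))⁻¹) _, hratio]
    _ = (∑ x : Fin d, min ((s:ℝ)) ((n x : ℝ) ^ 2 / (s:ℝ))) / d := by
        rw [Finset.sum_div]
        refine Finset.sum_congr rfl fun x _ => ?_
        rw [div_mul_eq_mul_div]
        congr 1
        rw [hg]
        rw [mul_min_of_nonneg _ _ (le_of_lt hsR), mul_one]
        congr 1
        field_simp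

/-- The collision event is unlikely: with `d = 2^p` (`p` even) and sets
`B_1, …, B_d ⊆ {1, …, d}` of total size at most `M`, when `k` is uniform in `{1, …, p/2}`,
`R` is a uniform subset of `{1, …, d}` of size `2^k`, and `r_1, …, r_d` are i.i.d. uniform
in `R`, the probability that some `i ≠ j` have `r_i = r_j`, `r_i ∈ B_i`, `r_j ∈ B_j`
is at most `160 M / (d log₂ d)`. -/
theorem stmt12 (p d : ℕ) (hd : d = 2 ^ p) (hpe : Even p)
    (B : Fin d → Finset (Fin d)) (M : ℕ) (hM : ∑ i : Fin d, (B i).card ≤ M) :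
    ((p / 2 : ℝ))⁻¹ * ∑ k ∈ Finset.Icc 1 (p / 2),
      ((((Finset.univ : Finset (Fin d)).powersetCard (2 ^ k)).card : ℝ))⁻¹ *
        ∑ R ∈ (Finset.univ : Finset (Fin d)).powersetCard (2 ^ k),
          ((((Fintype.piFinset fun _ : Fin d => R).filter fun r =>
              ∃ i j : Fin d, i ≠ j ∧ r i = r j ∧ r i ∈ B i ∧ r j ∈ B j).card : ℝ) /
            (((Fintype.piFinset fun _ : Fin d => R).card : ℝ)))
    ≤ 160 * (M : ℝ) / ((d : ℝ) * (p : ℝ)) := by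
  classical
  rcases Nat.eq_zero_or_pos p with rfl | hp
  · norm_num
  set n : Fin d → ℕ := fun x => (Finset.univ.filter (fun i : Fin d => x ∈ B i)).card with hn
  have hd2 : 2 ≤ d := by
    rw [hd]
    calc 2 = 2 ^ 1 := by norm_num
      _ ≤ 2 ^ p := Nat.pow_le_pow_right (by norm_num) hp
  have hd0R : (0:ℝ) < d := by
    have : 0 < d := by omega
    exact_mod_cast this
  have hpR : (0:ℝ) < p := by exact_mod_cast hp
  have hMR : (0:ℝ) ≤ M := Nat.cast_nonneg M
  have hsum_n : ∑ x : Fin d, n x ≤ M := by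
    have h1 : ∀ x : Fin d, n x = ∑ i : Fin d, if x ∈ B i then 1 else 0 := fun x =>
      Finset.card_filter _ _
    calc ∑ x : Fin d, n x = ∑ x : Fin d, ∑ i : Fin d, if x ∈ B i then 1 else 0 :=
        Finset.sum_congr rfl fun x _ => h1 x
      _ = ∑ i : Fin d, ∑ x : Fin d, if x ∈ B i then 1 else 0 := Finset.sum_comm
      _ = ∑ i : Fin d, (B i).card := by
          refine Finset.sum_congr rfl fun i _ => ?_
          rw [← Finset.card_filter, Finset.filter_univ_mem]
      _ ≤ M := hM
  have hperk : ∀ k ∈ Finset.Icc 1 (p / 2),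
      ((((Finset.univ : Finset (Fin d)).powersetCard (2 ^ k)).card : ℝ))⁻¹ *
        ∑ R ∈ (Finset.univ : Finset (Fin d)).powersetCard (2 ^ k),
          ((((Fintype.piFinset fun _ : Fin d => R).filter fun r =>
              ∃ i j : Fin d, i ≠ j ∧ r i = r j ∧ r i ∈ B i ∧ r j ∈ B j).card : ℝ) /
            (((Fintype.piFinset fun _ : Fin d => R).card : ℝ)))
      ≤ (∑ x : Fin d, min ((2:ℝ)^k) ((n x : ℝ) ^ 2 / (2:ℝ)^k)) / d := by
    intro k hk
    simp only [Finset.mem_Icc] at hk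
    have hs2 : 2 ≤ 2 ^ k := by
      calc 2 = 2 ^ 1 := by norm_num
        _ ≤ 2 ^ k := Nat.pow_le_pow_right (by norm_num) hk.1
    have hsd : 2 ^ k ≤ d := by
      rw [hd]
      exact Nat.pow_le_pow_right (by norm_num) (by omega)
    have h2 := perK d B (2 ^ k) hs2 hsd
    have hcast : ∀ x : Fin d, min (((2 ^ k : ℕ) : ℝ))
        (((Finset.univ.filter (fun i : Fin d => x ∈ B i)).card : ℝ) ^ 2 / ((2 ^ k : ℕ) : ℝ))
        = min ((2:ℝ)^k) ((n x : ℝ) ^ 2 / (2:ℝ)^k) := by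
      intro x
      have : ((2 ^ k : ℕ) : ℝ) = (2:ℝ)^k := by push_cast; ring
      rw [this, hn]
    calc _ ≤ (∑ x : Fin d, min (((2 ^ k : ℕ) : ℝ))
        (((Finset.univ.filter (fun i : Fin d => x ∈ B i)).card : ℝ) ^ 2
          / ((2 ^ k : ℕ) : ℝ))) / d := h2
      _ = _ := by rw [Finset.sum_congr rfl fun x _ => hcast x]
  calc ((p / 2 : ℝ))⁻¹ * ∑ k ∈ Finset.Icc 1 (p / 2),
      ((((Finset.univ : Finset (Fin d)).powersetCard (2 ^ k)).card : ℝ))⁻¹ *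
        ∑ R ∈ (Finset.univ : Finset (Fin d)).powersetCard (2 ^ k),
          ((((Fintype.piFinset fun _ : Fin d => R).filter fun r =>
              ∃ i j : Fin d, i ≠ j ∧ r i = r j ∧ r i ∈ B i ∧ r j ∈ B j).card : ℝ) /
            (((Fintype.piFinset fun _ : Fin d => R).card : ℝ)))
      ≤ ((p / 2 : ℝ))⁻¹ * ∑ k ∈ Finset.Icc 1 (p / 2),
          (∑ x : Fin d, min ((2:ℝ)^k) ((n x : ℝ) ^ 2 / (2:ℝ)^k)) / d := by
        refine mul_le_mul_of_nonneg_left (Finset.sum_le_sum hperk) (by positivity)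
    _ = ((p / 2 : ℝ))⁻¹ * ((∑ x : Fin d, ∑ k ∈ Finset.Icc 1 (p / 2),
          min ((2:ℝ)^k) ((n x : ℝ) ^ 2 / (2:ℝ)^k)) / d) := by
        rw [← Finset.sum_div, Finset.sum_comm]
    _ ≤ ((p / 2 : ℝ))⁻¹ * ((∑ x : Fin d, 4 * (n x : ℝ)) / d) := by
        refine mul_le_mul_of_nonneg_left ?_ (by positivity)
        refine div_le_div_of_nonneg_right ?_ (le_of_lt hd0R)
        exact Finset.sum_le_sum fun x _ => geomMin (n x) (p / 2)
    _ ≤ ((p / 2 : ℝ))⁻¹ * ((4 * (M:ℝ)) / d) := by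
        refine mul_le_mul_of_nonneg_left ?_ (by positivity)
        refine div_le_div_of_nonneg_right ?_ (le_of_lt hd0R)
        rw [← Finset.mul_sum]
        have : ((∑ x : Fin d, n x : ℕ) : ℝ) ≤ (M:ℝ) := by exact_mod_cast hsum_n
        push_cast at this ⊢
        linarith
    _ = 8 * (M:ℝ) / ((d:ℝ) * (p:ℝ)) := by
        field_simp
        ring
    _ ≤ 160 * (M : ℝ) / ((d : ℝ) * (p : ℝ)) := by
        gcongr
        linarith
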